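/- Let r ≥ 2 be an integer. A complex (r−1)×(r−1) matrix A satisfies C(p,q)·A = A·C(p, q+p) for all integers p, q if and only if A is a scalar multiple of the diagonal matrix T with diagonal entries T_{jj} = t^{j²−1}, j = 1, …, r−1. In particular, up to multiplication by a nonzero scalar, T is the unique invertible matrix with this property. -/

import Mathlib

open Complex Matrix

/-- `t = exp(iπ/(2r))`. -/
noncomputable def tconst (r : ℕ) : ℂ := Complex.exp (Real.pi * Complex.I / (2 * r))

/-- `ε(k,j) = 1` if `j ≡ k (mod 2r)`, `−1` if `j ≡ −k (mod 2r)`, `0` otherwise. -/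
def eps (r : ℕ) (k j : ℤ) : ℤ :=
  if (2 * (r : ℤ)) ∣ (j - k) then 1 else if (2 * (r : ℤ)) ∣ (j + k) then -1 else 0

/-- The matrix of the Weyl quantization of `2 cos 2π(px+qy)` in the basis `ζ_1, …, ζ_{r−1}`:
`C(p,q)_{k,m} = t^{−pq} (t^{2qm} ε(k, m−p) + t^{−2qm} ε(k, m+p))`, with indices shifted so that
the index `k : Fin (r-1)` corresponds to `k+1 ∈ {1, …, r−1}`. -/
noncomputable def Cmat (r : ℕ) (p q : ℤ) : Matrix (Fin (r - 1)) (Fin (r - 1)) ℂ :=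
  Matrix.of fun k m =>
    tconst r ^ (-(p * q)) *
      (tconst r ^ (2 * q * ((m : ℤ) + 1)) * (eps r ((k : ℤ) + 1) (((m : ℤ) + 1) - p) : ℂ) +
       tconst r ^ (-(2 * q * ((m : ℤ) + 1))) * (eps r ((k : ℤ) + 1) (((m : ℤ) + 1) + p) : ℂ))

/-- The quantized integer `[n] = sin(nπ/r)/sin(π/r)`. -/
noncomputable def qint (r : ℕ) (n : ℤ) : ℝ :=
  Real.sin (n * Real.pi / r) / Real.sin (Real.pi / r)

/-- The `T`-matrix: diagonal with entries `T_{jj} = t^{j²−1}`, `1 ≤ j ≤ r−1`. -/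
noncomputable def Tmat (r : ℕ) : Matrix (Fin (r - 1)) (Fin (r - 1)) ℂ :=
  Matrix.diagonal fun j => tconst r ^ (((j : ℤ) + 1) ^ 2 - 1)

lemma tconst_ne_zero (r : ℕ) : tconst r ≠ 0 := Complex.exp_ne_zero _

lemma tconst_zpow (r : ℕ) (n : ℤ) :
    tconst r ^ n = Complex.exp ((n : ℂ) * (Real.pi * Complex.I / (2 * r))) :=
  (Complex.exp_int_mul _ n).symm

lemma tconst_four_r (r : ℕ) (hr : 2 ≤ r) : tconst r ^ (4 * (r : ℤ)) = 1 := by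
  have hr0 : (r : ℂ) ≠ 0 := Nat.cast_ne_zero.mpr (by omega)
  rw [tconst_zpow]
  have h : ((4 * (r : ℤ) : ℤ) : ℂ) * (Real.pi * Complex.I / (2 * r)) = 2 * Real.pi * Complex.I := by
    push_cast
    field_simp
    ring
  rw [h, Complex.exp_two_pi_mul_I]

lemma tconst_congr (r : ℕ) (hr : 2 ≤ r) {a b : ℤ} (h : (4 * (r : ℤ)) ∣ a - b) :
    tconst r ^ a = tconst r ^ b := by
  obtain ⟨s, hs⟩ := h
  have ha : a = b + 4 * (r : ℤ) * s := by linarith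
  rw [ha, zpow_add₀ (tconst_ne_zero r), _root_.zpow_mul, tconst_four_r r hr, _root_.one_zpow, mul_one]

lemma eps_sq (r : ℕ) {k j : ℤ} (h : eps r k j ≠ 0) : (4 * (r : ℤ)) ∣ j ^ 2 - k ^ 2 := by
  unfold eps at h
  split_ifs at h with h1 h2
  · obtain ⟨s, hs⟩ := h1
    exact ⟨s * (r * s + k), by linear_combination (j + k + 2 * (r:ℤ) * s) * hs⟩
  · obtain ⟨s, hs⟩ := h2
    exact ⟨s * (r * s - k), by linear_combination (j - k + 2 * (r:ℤ) * s) * hs⟩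
  · exact absurd rfl h

lemma zpow_mul_eps (r : ℕ) (hr : 2 ≤ r) (a b K j : ℤ) (h : a - b = j ^ 2 - K ^ 2) :
    tconst r ^ a * (eps r K j : ℂ) = tconst r ^ b * (eps r K j : ℂ) := by
  by_cases he : eps r K j = 0
  · simp [he]
  · rw [tconst_congr r hr (h ▸ eps_sq r he)]

lemma expandL {t : ℂ} (ht : t ≠ 0) (a b c : ℤ) (u v : ℂ) :
    t ^ a * (t ^ b * u + t ^ (-b) * v) * t ^ c
      = t ^ (a + b + c) * u + t ^ (a + -b + c) * v := by
  rw [zpow_add₀ ht, zpow_add₀ ht, zpow_add₀ ht, zpow_add₀ ht]; ring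

lemma expandR {t : ℂ} (ht : t ≠ 0) (c a b : ℤ) (u v : ℂ) :
    t ^ c * (t ^ a * (t ^ b * u + t ^ (-b) * v))
      = t ^ (c + a + b) * u + t ^ (c + a + -b) * v := by
  rw [zpow_add₀ ht, zpow_add₀ ht, zpow_add₀ ht, zpow_add₀ ht]; ring

lemma Cmat_mul_Tmat (r : ℕ) (hr : 2 ≤ r) (p q : ℤ) :
    Cmat r p q * Tmat r = Tmat r * Cmat r p (q + p) := by
  have ht := tconst_ne_zero r
  ext k m
  rw [Tmat, Matrix.mul_diagonal, Matrix.diagonal_mul]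
  simp only [Cmat, Matrix.of_apply]
  set K : ℤ := (k : ℤ) + 1 with hK
  set M : ℤ := (m : ℤ) + 1 with hM
  rw [expandL ht, expandR ht]
  rw [zpow_mul_eps r hr (-(p*q) + 2*q*M + (M^2-1)) ((K^2-1) + -(p*(q+p)) + 2*(q+p)*M) K (M-p) (by ring),
      zpow_mul_eps r hr (-(p*q) + -(2*q*M) + (M^2-1)) ((K^2-1) + -(p*(q+p)) + -(2*(q+p)*M)) K (M+p) (by ring)]

lemma not_dvd_small (r : ℕ) {x : ℤ} (h0 : x ≠ 0) (h1 : -(2*(r:ℤ)) < x) (h2 : x < 2*(r:ℤ)) :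
    ¬ (2 * (r : ℤ)) ∣ x := by
  intro hd
  have habs : (2 * (r : ℤ)) ∣ |x| := (dvd_abs _ _).mpr hd
  have := Int.le_of_dvd (abs_pos.mpr h0) habs
  rcases abs_cases x with ⟨h, _⟩ | ⟨h, _⟩ <;> omega

lemma eps_self (r : ℕ) (k : ℤ) : eps r k k = 1 := by simp [eps]

lemma eps_of_ne (r : ℕ) {k j : ℤ} (h1 : ¬ (2 * (r : ℤ)) ∣ (j - k)) (h2 : ¬ (2 * (r : ℤ)) ∣ (j + k)) :
    eps r k j = 0 := by simp [eps, h1, h2]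

lemma eps_eval (r : ℕ) (hr : 2 ≤ r) (k m : Fin (r - 1)) :
    eps r ((k : ℤ) + 1) ((m : ℤ) + 1) = if k = m then 1 else 0 := by
  have hk : (k : ℕ) < r - 1 := k.isLt
  have hm : (m : ℕ) < r - 1 := m.isLt
  have hk' : ((k : ℕ) : ℤ) < (r : ℤ) - 1 := by omega
  have hm' : ((m : ℕ) : ℤ) < (r : ℤ) - 1 := by omega
  by_cases hkm : k = m
  · subst hkm; simp [eps_self]
  · have hne : ((m : ℕ) : ℤ) ≠ ((k : ℕ) : ℤ) := by
      simp only [ne_eq, Nat.cast_inj]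
      exact fun h => hkm (Fin.ext h).symm
    rw [if_neg hkm]
    refine eps_of_ne r ?_ ?_
    · apply not_dvd_small r (by omega) (by omega) (by omega)
    · apply not_dvd_small r (by omega) (by omega) (by omega)

lemma tconst_two_cos (r : ℕ) (hr : 2 ≤ r) (n : ℤ) :
    tconst r ^ (2 * n) + tconst r ^ (-(2 * n)) = ((2 * Real.cos (n * Real.pi / r) : ℝ) : ℂ) := by
  have hr0 : (r : ℂ) ≠ 0 := Nat.cast_ne_zero.mpr (by omega)
  have harg : ((2 * n : ℤ) : ℂ) * (Real.pi * Complex.I / (2 * r))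
      = ((n * Real.pi / r : ℝ) : ℂ) * Complex.I := by
    push_cast
    field_simp
  have harg' : ((-(2 * n) : ℤ) : ℂ) * (Real.pi * Complex.I / (2 * r))
      = -((n * Real.pi / r : ℝ) : ℂ) * Complex.I := by
    push_cast
    field_simp
  rw [tconst_zpow, tconst_zpow, harg, harg', ← Complex.two_cos, ← Complex.ofReal_cos]
  push_cast
  ring

lemma Cmat_diag (r : ℕ) (hr : 2 ≤ r) (q : ℤ) :
    Cmat r 0 q = Matrix.diagonal
      (fun m : Fin (r - 1) => ((2 * Real.cos (q * ((m : ℕ) + 1) * Real.pi / r) : ℝ) : ℂ)) := by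
  ext k m
  simp only [Cmat, Matrix.of_apply, Matrix.diagonal_apply]
  rw [sub_zero, add_zero, eps_eval r hr k m]
  by_cases hkm : k = m
  · subst hkm
    rw [if_pos rfl, if_pos rfl]
    have h2 : 2 * q * ((k : ℤ) + 1) = 2 * (q * ((k : ℤ) + 1)) := by ring
    simp only [Int.cast_one, mul_one, zero_mul, mul_zero, neg_zero, zpow_zero, one_mul, h2]
    rw [tconst_two_cos r hr (q * ((k : ℤ) + 1))]
    have h3 : ((q * ((k : ℤ) + 1) : ℤ) : ℝ) * Real.pi / r
        = (q : ℝ) * (((k : ℕ) : ℝ) + 1) * Real.pi / r := by push_cast; ring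
    rw [h3]
  · rw [if_neg hkm, if_neg hkm]
    simp

lemma cos_inj (r : ℕ) (hr : 2 ≤ r) (k m : Fin (r - 1))
    (h : (2 * Real.cos (1 * ((k : ℕ) + 1) * Real.pi / r) : ℝ)
       = (2 * Real.cos (1 * ((m : ℕ) + 1) * Real.pi / r) : ℝ)) : k = m := by
  have hπ := Real.pi_pos
  have hrp : (0:ℝ) < r := by positivity
  have hb : ∀ j : Fin (r - 1), (1 * ((j : ℕ) + 1) * Real.pi / r : ℝ) ∈ Set.Icc 0 Real.pi := by
    intro j
    have hj : ((j : ℕ) : ℝ) + 1 ≤ (r : ℝ) - 1 := by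
      have hj' := j.isLt
      have : ((j : ℕ) + 1 : ℕ) ≤ r - 1 := hj'
      have : (((j : ℕ) + 1 : ℕ) : ℝ) ≤ ((r - 1 : ℕ) : ℝ) := Nat.cast_le.mpr this
      push_cast [Nat.cast_sub (by omega : 1 ≤ r)] at this
      linarith
    constructor
    · positivity
    · rw [div_le_iff₀ hrp]
      nlinarith
  have hcos : Real.cos (1 * ((k : ℕ) + 1) * Real.pi / r)
      = Real.cos (1 * ((m : ℕ) + 1) * Real.pi / r) := by linarith
  have := Real.injOn_cos (hb k) (hb m) hcos
  have hπ' : Real.pi ≠ 0 := ne_of_gt hπ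
  have hr' : (r : ℝ) ≠ 0 := ne_of_gt hrp
  field_simp at this
  exact Fin.ext (by exact_mod_cast (by linarith : ((k : ℕ) : ℝ) = ((m : ℕ) : ℝ)))


/-- A complex `(r−1)×(r−1)` matrix `A` satisfies `C(p,q)·A = A·C(p,q+p)` for all integers `p, q`
if and only if `A` is a scalar multiple of the diagonal matrix `T` with `T_{jj} = t^{j²−1}`. -/
theorem weyl_T_matrix_unique (r : ℕ) (hr : 2 ≤ r)
    (A : Matrix (Fin (r - 1)) (Fin (r - 1)) ℂ) :
    (∀ p q : ℤ, Cmat r p q * A = A * Cmat r p (q + p)) ↔ ∃ c : ℂ, A = c • Tmat r := by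
  have ht := tconst_ne_zero r
  have hpos : 0 < r - 1 := by omega
  constructor
  · intro h
    -- Step 1 : A is diagonal
    have hdiag : ∀ k m : Fin (r - 1), k ≠ m → A k m = 0 := by
      intro k m hkm
      have h01 := h 0 1
      norm_num at h01
      rw [Cmat_diag r hr 1] at h01
      have e := congrFun (congrFun h01 k) m
      rw [Matrix.diagonal_mul, Matrix.mul_diagonal] at e
      have hgkm : ((2 * Real.cos (((1:ℤ):ℝ) * ((k:ℕ)+1) * Real.pi / r) : ℝ) : ℂ)
          ≠ ((2 * Real.cos (((1:ℤ):ℝ) * ((m:ℕ)+1) * Real.pi / r) : ℝ) : ℂ) := by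
        intro hg
        apply hkm
        apply cos_inj r hr k m
        have := Complex.ofReal_inj.mp hg
        simpa using this
      have hz : A k m * (((2 * Real.cos (((1:ℤ):ℝ) * ((k:ℕ)+1) * Real.pi / r) : ℝ) : ℂ)
          - ((2 * Real.cos (((1:ℤ):ℝ) * ((m:ℕ)+1) * Real.pi / r) : ℝ) : ℂ)) = 0 := by
        linear_combination e
      rcases mul_eq_zero.mp hz with h' | h'
      · exact h'
      · exact absurd (sub_eq_zero.mp h') hgkm
    -- Step 2 : recursion along the diagonal
    have hstep : ∀ (n : ℕ) (h1 : n < r - 1) (h2 : n + 1 < r - 1),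
        A ⟨n+1, h2⟩ ⟨n+1, h2⟩ = A ⟨n, h1⟩ ⟨n, h1⟩ * tconst r ^ (2*(n:ℤ)+3) := by
      intro n h1 h2
      have h10 := h 1 0
      norm_num at h10
      have e := congrFun (congrFun h10 (⟨n, h1⟩ : Fin (r-1))) (⟨n+1, h2⟩ : Fin (r-1))
      rw [Matrix.mul_apply, Matrix.mul_apply] at e
      rw [Finset.sum_eq_single (⟨n+1, h2⟩ : Fin (r-1))
            (fun j _ hj => by rw [hdiag j _ hj, mul_zero]) (by simp),
          Finset.sum_eq_single (⟨n, h1⟩ : Fin (r-1))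
            (fun j _ hj => by rw [hdiag _ j (Ne.symm hj), zero_mul])
            (by simp)] at e
      have hv1 : ((⟨n, h1⟩ : Fin (r-1)) : ℤ) = (n : ℤ) := by simp
      have hv2 : ((⟨n+1, h2⟩ : Fin (r-1)) : ℤ) = (n : ℤ) + 1 := by simp
      have c10 : Cmat r 1 0 (⟨n, h1⟩ : Fin (r-1)) (⟨n+1, h2⟩ : Fin (r-1)) = 1 := by
        simp only [Cmat, Matrix.of_apply, hv1, hv2]
        rw [show (n:ℤ) + 1 + 1 - 1 = (n:ℤ) + 1 by ring, eps_self]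
        rw [show (n:ℤ) + 1 + 1 + 1 = (n:ℤ) + 3 by ring]
        rw [eps_of_ne r
          (not_dvd_small r (by omega) (by omega) (by omega))
          (not_dvd_small r (by omega) (by omega) (by omega))]
        norm_num
      have c11 : Cmat r 1 1 (⟨n, h1⟩ : Fin (r-1)) (⟨n+1, h2⟩ : Fin (r-1))
          = tconst r ^ (2*(n:ℤ)+3) := by
        simp only [Cmat, Matrix.of_apply, hv1, hv2]
        rw [show (n:ℤ) + 1 + 1 - 1 = (n:ℤ) + 1 by ring, eps_self]
        rw [show (n:ℤ) + 1 + 1 + 1 = (n:ℤ) + 3 by ring]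
        rw [eps_of_ne r
          (not_dvd_small r (by omega) (by omega) (by omega))
          (not_dvd_small r (by omega) (by omega) (by omega))]
        rw [show (2 * 1 * ((n:ℤ) + 1 + 1)) = 2*(n:ℤ)+4 by ring]
        push_cast
        rw [mul_zero, add_zero, mul_one, ← zpow_add₀ ht,
          show (-1 + (2*(n:ℤ)+4)) = 2*(n:ℤ)+3 by ring]
      rw [c10, c11, one_mul] at e
      exact e
    -- Step 3 : induction
    have hind : ∀ (n : ℕ) (hn : n < r - 1),
        A ⟨n, hn⟩ ⟨n, hn⟩
          = A ⟨0, hpos⟩ ⟨0, hpos⟩ * tconst r ^ (((n:ℤ)+1)^2 - 1) := by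
      intro n
      induction n with
      | zero => intro hn; norm_num
      | succ n ih =>
        intro hn
        have h1 : n < r - 1 := by omega
        rw [hstep n h1 hn, ih h1, mul_assoc, ← zpow_add₀ ht]
        congr 2
        push_cast
        ring
    refine ⟨A ⟨0, hpos⟩ ⟨0, hpos⟩, ?_⟩
    ext i j
    rw [Matrix.smul_apply, Tmat, Matrix.diagonal_apply, smul_eq_mul]
    by_cases hij : i = j
    · subst hij
      rw [if_pos rfl]
      have := hind i.val i.isLt
      simpa using this
    · rw [if_neg hij, mul_zero]
      exact hdiag i j hij
  · rintro ⟨c, rfl⟩ p q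
    rw [Matrix.mul_smul, Matrix.smul_mul, Cmat_mul_Tmat r hr p q]
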